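/- Fix d ≥ 1, γ ∈ (0,1], σ > 0 and f ∈ ℝ^d, and let q₀ : ℝ^d → [0,∞) be measurable with q₀(y₀) ≤ c₁ exp(−c₂ ‖y₀‖²/2) for all y₀, for constants c₁, c₂ > 0. Write A = γ² + c₂ σ². For i ∈ {1,…,d} define G_i(y) = (σ^d (2π)^{d/2})^{-1} ∫_{ℝ^d} ( (y_i − γ y_{0,i} − (1−γ) f_i)/σ² ) · q₀(y₀) · exp( −‖ y − γ y₀ − (1−γ) f ‖² / (2σ²) ) dy₀ (this is, up to sign, the i-th partial derivative of the diffused conditional density). Then for every y ∈ ℝ^d and every i: |G_i(y)| ≤ c₁ A^{−d/2} · exp( −c₂ ‖ y − (1−γ) f ‖² / (2A) ) · ( c₂ | y_i − (1−γ) f_i | / A + γ / ( σ √A ) ). -/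

import Mathlib

open MeasureTheory Real Filter


lemma int_Ioi_mul_exp {b : ℝ} (hb : 0 < b) :
    ∫ r in Set.Ioi (0:ℝ), r * rexp (-b * r ^ 2) = (2 * b)⁻¹ := by
  have hderiv : ∀ x ∈ Set.Ioi (0:ℝ),
      HasDerivAt (fun x : ℝ => -(2*b)⁻¹ * rexp (-b * x ^ 2)) (x * rexp (-b * x ^ 2)) x := by
    intro x _
    have h1 : HasDerivAt (fun x : ℝ => -b * x ^ 2) (-b * (2 * x)) x := by
      simpa using ((hasDerivAt_pow 2 x).const_mul (-b))
    have h2 := (h1.exp).const_mul (-(2*b)⁻¹)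
    refine h2.congr_deriv ?_
    field_simp
  have htend : Tendsto (fun x : ℝ => -(2*b)⁻¹ * rexp (-b * x ^ 2)) atTop (nhds 0) := by
    have : Tendsto (fun x : ℝ => -b * x ^ 2) atTop atBot := by
      exact (tendsto_pow_atTop (two_ne_zero)).const_mul_atTop_of_neg (neg_neg_iff_pos.mpr hb)
    simpa using (Real.tendsto_exp_atBot.comp this).const_mul (-(2*b)⁻¹)
  have := integral_Ioi_of_hasDerivAt_of_tendsto (a := 0)
    (Continuous.continuousWithinAt (by fun_prop)) hderiv (integrable_mul_exp_neg_mul_sq hb).integrableOn htend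
  rw [this]; simp

lemma int_abs_mul_exp {b : ℝ} (hb : 0 < b) :
    ∫ t : ℝ, |t| * rexp (-b * t ^ 2) = 1 / b := by
  have : ∫ t : ℝ, |t| * rexp (-b * t ^ 2) = ∫ t : ℝ, (fun u => u * rexp (-b * u ^ 2)) |t| := by
    congr 1 with t; simp [sq_abs]
  rw [this, integral_comp_abs (f := fun u => u * rexp (-b * u ^ 2)), int_Ioi_mul_exp hb]
  field_simp

lemma integrable_abs_mul_exp {b : ℝ} (hb : 0 < b) :
    Integrable fun t : ℝ => |t| * rexp (-b * t ^ 2) := by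
  have := (integrable_mul_exp_neg_mul_sq hb).abs
  refine this.congr (Filter.Eventually.of_forall fun t => ?_)
  simp only [abs_mul, abs_of_nonneg (exp_pos (-b * t ^ 2)).le]


section Euclid
variable {d : ℕ} (i : Fin d) {b : ℝ}

noncomputable def Ffun (i : Fin d) (b : ℝ) : Fin d → ℝ → ℝ :=
  fun j t => if j = i then |t| * rexp (-b * t ^ 2) else rexp (-b * t ^ 2)

lemma Ffun_prod (x : Fin d → ℝ) :
    ∏ j, Ffun i b j (x j) = |x i| * rexp (-b * ∑ j, (x j) ^ 2) := by
  rw [← Finset.mul_prod_erase Finset.univ _ (Finset.mem_univ i)]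
  have h1 : Ffun i b i (x i) = |x i| * rexp (-b * (x i) ^ 2) := by simp [Ffun]
  have h2 : ∏ j ∈ Finset.univ.erase i, Ffun i b j (x j)
      = ∏ j ∈ Finset.univ.erase i, rexp (-b * (x j) ^ 2) := by
    refine Finset.prod_congr rfl fun j hj => ?_
    simp [Ffun, (Finset.mem_erase.mp hj).1]
  rw [h1, h2]
  rw [show (-b * ∑ j, (x j)^2) = ∑ j, -b * (x j)^2 by rw [Finset.mul_sum], Real.exp_sum,
    ← Finset.mul_prod_erase Finset.univ (fun j => rexp (-b * (x j)^2)) (Finset.mem_univ i)]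
  ring

lemma euclid_norm_sq (v : EuclideanSpace ℝ (Fin d)) : ‖v‖ ^ 2 = ∑ j, (v j) ^ 2 := by
  rw [EuclideanSpace.norm_eq, Real.sq_sqrt (Finset.sum_nonneg fun j _ => by positivity)]
  simp [sq_abs]

lemma euclid_key (x : Fin d → ℝ) :
    |((MeasurableEquiv.toLp 2 (Fin d → ℝ)).symm).symm x i| *
      rexp (-b * ‖((MeasurableEquiv.toLp 2 (Fin d → ℝ)).symm).symm x‖ ^ 2)
      = ∏ j, Ffun i b j (x j) := by
  rw [Ffun_prod, euclid_norm_sq]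
  rfl

lemma euclid_moment_integrable (hb : 0 < b) :
    Integrable fun v : EuclideanSpace ℝ (Fin d) => |v i| * rexp (-b * ‖v‖ ^ 2) := by
  have mp := (EuclideanSpace.volume_preserving_symm_measurableEquiv_toLp (Fin d)).symm
  rw [← mp.integrable_comp_emb (MeasurableEquiv.measurableEmbedding _)]
  have : (fun v : EuclideanSpace ℝ (Fin d) => |v i| * rexp (-b * ‖v‖ ^ 2)) ∘
      ((MeasurableEquiv.toLp 2 (Fin d → ℝ)).symm).symm
      = fun x : Fin d → ℝ => ∏ j, Ffun i b j (x j) := by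
    funext x; exact euclid_key i x
  rw [this]
  refine Integrable.fintype_prod fun j => ?_
  rcases eq_or_ne j i with h | h
  · subst h
    have e : Ffun j b j = fun t => |t| * rexp (-b * t ^ 2) := by funext t; simp [Ffun]
    rw [e]; exact integrable_abs_mul_exp hb
  · have e : Ffun i b j = fun t => rexp (-b * t ^ 2) := by funext t; simp [Ffun, h]
    rw [e]; exact integrable_exp_neg_mul_sq hb

lemma euclid_moment (hb : 0 < b) :
    ∫ v : EuclideanSpace ℝ (Fin d), |v i| * rexp (-b * ‖v‖ ^ 2)
      = (1 / b) * Real.sqrt (π / b) ^ (d - 1) := by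
  have mp := (EuclideanSpace.volume_preserving_symm_measurableEquiv_toLp (Fin d)).symm
  rw [← mp.integral_comp (MeasurableEquiv.measurableEmbedding _)]
  simp only [Function.comp_apply]
  simp_rw [euclid_key i]
  rw [integral_fintype_prod_volume_eq_prod]
  rw [← Finset.mul_prod_erase Finset.univ _ (Finset.mem_univ i)]
  have h1 : ∫ t : ℝ, Ffun i b i t = 1 / b := by
    simp only [Ffun, if_pos rfl]; exact int_abs_mul_exp hb
  have h2 : ∏ j ∈ Finset.univ.erase i, ∫ t : ℝ, Ffun i b j t
      = Real.sqrt (π / b) ^ (d - 1) := by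
    have : ∀ j ∈ Finset.univ.erase i, (∫ t : ℝ, Ffun i b j t) = Real.sqrt (π / b) := by
      intro j hj
      simp only [Ffun, if_neg (Finset.mem_erase.mp hj).1]
      exact integral_gaussian b
    rw [Finset.prod_congr rfl this, Finset.prod_const, Finset.card_erase_of_mem (Finset.mem_univ i),
      Finset.card_univ, Fintype.card_fin]
  rw [h1, h2]
end Euclid


lemma rpow_half_nat {x : ℝ} (hx : 0 ≤ x) (d : ℕ) : x ^ ((d:ℝ)/2) = Real.sqrt x ^ d := by
  rw [Real.sqrt_eq_rpow, ← Real.rpow_natCast (x ^ ((1:ℝ)/2)) d, ← Real.rpow_mul hx]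
  congr 1
  ring

lemma gauss_const_eq (d : ℕ) (σ A : ℝ) (hσ : 0 < σ) (hA : 0 < A) :
    (σ ^ d * (2*π) ^ ((d:ℝ)/2))⁻¹ * (π/(A/(2*σ^2))) ^ ((d:ℝ)/2) = A ^ (-(d:ℝ)/2) := by
  have h2π : (0:ℝ) < 2*π := by positivity
  have hπb : π/(A/(2*σ^2)) = 2*π*σ^2/A := by field_simp
  have hsA : (0:ℝ) < Real.sqrt A := Real.sqrt_pos.mpr hA
  have hs2π : (0:ℝ) < Real.sqrt (2*π) := Real.sqrt_pos.mpr h2π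
  rw [hπb, show (-(d:ℝ)/2) = -((d:ℝ)/2) by ring, Real.rpow_neg hA.le,
    rpow_half_nat h2π.le d, rpow_half_nat (x := 2*π*σ^2/A) (by positivity) d,
    rpow_half_nat hA.le d, show 2*π*σ^2/A = (2*π)*σ^2/A by ring]
  rw [show Real.sqrt ((2*π)*σ^2/A) = Real.sqrt (2*π) * σ / Real.sqrt A by
    rw [Real.sqrt_div' _ (by positivity), Real.sqrt_mul h2π.le, Real.sqrt_sq hσ.le]]
  rw [div_pow, mul_pow]
  field_simp

lemma gauss_const_le (d : ℕ) (hd : 1 ≤ d) (σ A : ℝ) (hσ : 0 < σ) (hA : 0 < A) :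
    (σ ^ d * (2*π) ^ ((d:ℝ)/2))⁻¹ * ((1/(A/(2*σ^2))) * Real.sqrt (π/(A/(2*σ^2))) ^ (d-1)) * (1/σ^2)
      ≤ A ^ (-(d:ℝ)/2) / (σ * Real.sqrt A) := by
  obtain ⟨e, rfl⟩ : ∃ e, d = e + 1 := ⟨d - 1, (Nat.succ_pred_eq_of_pos hd).symm⟩
  have h2π : (0:ℝ) < 2*π := by positivity
  have hπb : π/(A/(2*σ^2)) = (2*π)*σ^2/A := by field_simp
  have hb : 1/(A/(2*σ^2)) = 2*σ^2/A := by field_simp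
  set s := Real.sqrt (2*π) with hs
  set r := Real.sqrt A with hr
  have hsA : (0:ℝ) < r := Real.sqrt_pos.mpr hA
  have hs2π : (0:ℝ) < s := Real.sqrt_pos.mpr h2π
  have hrA : r^2 = A := Real.sq_sqrt hA.le
  have hs2 : 2 ≤ s := by
    nlinarith [Real.sq_sqrt h2π.le, Real.sqrt_nonneg (2*π), Real.pi_gt_three]
  rw [hπb, hb, show (-(↑(e+1):ℝ)/2) = -((↑(e+1):ℝ)/2) by ring, Real.rpow_neg hA.le,
    rpow_half_nat h2π.le, rpow_half_nat hA.le,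
    show Real.sqrt ((2*π)*σ^2/A) = s * σ / r by
      rw [Real.sqrt_div' _ (by positivity), Real.sqrt_mul h2π.le, Real.sqrt_sq hσ.le],
    show e + 1 - 1 = e by rfl]
  have lhs_eq : (σ^(e+1) * s^(e+1))⁻¹ * ((2*σ^2/A) * (s*σ/r)^e) * (1/σ^2)
      = 2/(s*(r^(e+2)*σ)) := by
    rw [div_pow, mul_pow]
    rw [← hrA]
    field_simp
    ring
  have rhs_eq : (r^(e+1))⁻¹ / (σ * r) = 1/(r^(e+2)*σ) := by
    field_simp; ring
  rw [lhs_eq, rhs_eq]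
  have hX : (0:ℝ) < r^(e+2)*σ := by positivity
  rw [div_le_div_iff₀ (by positivity) hX]
  nlinarith [hX]


lemma euclid_norm_sq' {d : ℕ} (v : EuclideanSpace ℝ (Fin d)) : ‖v‖ ^ 2 = ∑ j, (v j) ^ 2 := by
  rw [EuclideanSpace.norm_eq, Real.sq_sqrt (Finset.sum_nonneg fun j _ => by positivity)]
  simp [sq_abs]

lemma euclid_gauss_integrable {d : ℕ} {b : ℝ} (hb : 0 < b) :
    Integrable fun v : EuclideanSpace ℝ (Fin d) => rexp (-b * ‖v‖ ^ 2) := by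
  have mp := (EuclideanSpace.volume_preserving_symm_measurableEquiv_toLp (Fin d)).symm
  rw [← mp.integrable_comp_emb (MeasurableEquiv.measurableEmbedding _)]
  have : (fun v : EuclideanSpace ℝ (Fin d) => rexp (-b * ‖v‖ ^ 2)) ∘
      ((MeasurableEquiv.toLp 2 (Fin d → ℝ)).symm).symm
      = fun x : Fin d → ℝ => ∏ j, rexp (-b * (x j) ^ 2) := by
    funext x
    rw [Function.comp_apply, euclid_norm_sq',
      show (-b * ∑ j, ((((MeasurableEquiv.toLp 2 (Fin d → ℝ)).symm).symm x) j)^2)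
        = ∑ j, -b * (x j)^2 by rw [Finset.mul_sum]; rfl, Real.exp_sum]
  rw [this]
  exact Integrable.fintype_prod fun j => integrable_exp_neg_mul_sq hb


/-- Lemma 2 of the paper: bound on the (i-th component of the) gradient of the diffused
conditional density. With `A = γ² + c₂σ²`,
`G_i(y) = (σ^d(2π)^{d/2})⁻¹ ∫ ((y_i − γ y_{0,i} − (1−γ)f_i)/σ²) q₀(y₀)
            e^{−‖y−γy₀−(1−γ)f‖²/(2σ²)} dy₀`
satisfies `|G_i(y)| ≤ c₁ A^{−d/2} e^{−c₂‖y−(1−γ)f‖²/(2A)} (c₂|y_i−(1−γ)f_i|/A + γ/(σ√A))`. -/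
theorem diffused_density_gradient_bound
    (d : ℕ) (hd : 1 ≤ d) (γ σ : ℝ) (hγ : γ ∈ Set.Ioc (0:ℝ) 1) (hσ : 0 < σ)
    (f : EuclideanSpace ℝ (Fin d))
    (q₀ : EuclideanSpace ℝ (Fin d) → ℝ)
    (hq₀m : Measurable q₀) (hq₀nn : ∀ y₀, 0 ≤ q₀ y₀)
    (c₁ c₂ : ℝ) (hc₁ : 0 < c₁) (hc₂ : 0 < c₂)
    (htail : ∀ y₀, q₀ y₀ ≤ c₁ * Real.exp (-c₂ * ‖y₀‖ ^ 2 / 2))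
    (A : ℝ) (hA : A = γ ^ 2 + c₂ * σ ^ 2)
    (G : Fin d → EuclideanSpace ℝ (Fin d) → ℝ)
    (hG : ∀ i y, G i y = (σ ^ d * (2 * Real.pi) ^ ((d : ℝ) / 2))⁻¹ *
        ∫ y₀, ((y i - γ * y₀ i - (1 - γ) * f i) / σ ^ 2) * q₀ y₀ *
          Real.exp (-‖y - γ • y₀ - (1 - γ) • f‖ ^ 2 / (2 * σ ^ 2))) :
    ∀ (y : EuclideanSpace ℝ (Fin d)) (i : Fin d),
      |G i y| ≤ c₁ * A ^ (-(d : ℝ) / 2) *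
          Real.exp (-c₂ * ‖y - (1 - γ) • f‖ ^ 2 / (2 * A)) *
          (c₂ * |y i - (1 - γ) * f i| / A + γ / (σ * Real.sqrt A)) := by
  intro y i
  have hγ0 : 0 < γ := hγ.1
  have hA0 : 0 < A := by rw [hA]; positivity
  have hσ2 : (0:ℝ) < σ ^ 2 := by positivity
  have hb0 : 0 < A / (2 * σ ^ 2) := by positivity
  rw [hG]
  set z : EuclideanSpace ℝ (Fin d) := y - (1 - γ) • f with hz
  set m : EuclideanSpace ℝ (Fin d) := (γ / A) • z with hm
  have hzi : z i = y i - (1 - γ) * f i := by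
    rw [hz]; simp [PiLp.sub_apply, PiLp.smul_apply, smul_eq_mul]
  have hmi : m i = (γ / A) * z i := by rw [hm]; simp [PiLp.smul_apply]
  have hvec : ∀ y₀ : EuclideanSpace ℝ (Fin d),
      y - γ • y₀ - (1 - γ) • f = z - γ • y₀ := by
    intro y₀; rw [hz]; abel
  -- exponent identity
  have hexp : ∀ y₀ : EuclideanSpace ℝ (Fin d),
      c₂ * ‖y₀‖ ^ 2 / 2 + ‖z - γ • y₀‖ ^ 2 / (2 * σ ^ 2)
        = (A / (2 * σ ^ 2)) * ‖y₀ - m‖ ^ 2 + c₂ * ‖z‖ ^ 2 / (2 * A) := by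
    intro y₀
    have e1 : ‖z - γ • y₀‖ ^ 2
        = ‖z‖ ^ 2 - 2 * (γ * (inner ℝ z y₀ : ℝ)) + γ ^ 2 * ‖y₀‖ ^ 2 := by
      rw [norm_sub_sq_real, real_inner_smul_right, norm_smul]
      simp [mul_pow, Real.norm_eq_abs, sq_abs]
    have e2 : ‖y₀ - m‖ ^ 2
        = ‖y₀‖ ^ 2 - 2 * ((γ / A) * (inner ℝ z y₀ : ℝ)) + (γ / A) ^ 2 * ‖z‖ ^ 2 := by
      rw [hm, norm_sub_sq_real, real_inner_smul_right, real_inner_comm, norm_smul]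
      simp [mul_pow, Real.norm_eq_abs, sq_abs, abs_div, abs_of_pos hγ0, abs_of_pos hA0]
    have hA' : A ≠ 0 := ne_of_gt hA0
    have hσ' : σ ≠ 0 := ne_of_gt hσ
    rw [e1, e2]
    field_simp
    rw [hA]
    ring
  -- coordinate bound
  have hcoord : ∀ y₀ : EuclideanSpace ℝ (Fin d),
      |z i - γ * y₀ i| ≤ (c₂ * σ ^ 2 / A) * |z i| + γ * |y₀ i - m i| := by
    intro y₀
    have hid : z i - γ * y₀ i = (c₂ * σ ^ 2 / A) * z i - γ * (y₀ i - m i) := by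
      rw [hmi]
      have hA' : A ≠ 0 := ne_of_gt hA0
      field_simp
      rw [hA]; ring
    rw [hid]
    refine (abs_sub _ _).trans ?_
    rw [abs_mul, abs_mul, abs_of_nonneg (by positivity : (0:ℝ) ≤ c₂ * σ ^ 2 / A),
      abs_of_nonneg hγ0.le]
  -- the dominating function
  set K : ℝ := c₁ * rexp (-c₂ * ‖z‖ ^ 2 / (2 * A)) with hK
  have hK0 : 0 ≤ K := by positivity
  set g : EuclideanSpace ℝ (Fin d) → ℝ := fun y₀ =>
      K * (c₂ / A) * |z i| * rexp (-(A / (2 * σ ^ 2)) * ‖y₀ - m‖ ^ 2)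
      + K * (γ / σ ^ 2) * (|y₀ i - m i| * rexp (-(A / (2 * σ ^ 2)) * ‖y₀ - m‖ ^ 2)) with hg
  -- pointwise bound
  have hpoint : ∀ y₀ : EuclideanSpace ℝ (Fin d),
      |((y i - γ * y₀ i - (1 - γ) * f i) / σ ^ 2) * q₀ y₀ *
        rexp (-‖y - γ • y₀ - (1 - γ) • f‖ ^ 2 / (2 * σ ^ 2))| ≤ g y₀ := by
    intro y₀
    have h1 : y i - γ * y₀ i - (1 - γ) * f i = z i - γ * y₀ i := by rw [hzi]; ring
    rw [h1, hvec y₀, abs_mul, abs_mul, abs_div, abs_of_nonneg (hq₀nn y₀),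
      abs_of_nonneg (exp_pos _).le, abs_of_nonneg hσ2.le]
    have hprod : q₀ y₀ * rexp (-‖z - γ • y₀‖ ^ 2 / (2 * σ ^ 2))
        ≤ K * rexp (-(A / (2 * σ ^ 2)) * ‖y₀ - m‖ ^ 2) := by
      have key : rexp (-c₂ * ‖y₀‖ ^ 2 / 2) * rexp (-‖z - γ • y₀‖ ^ 2 / (2 * σ ^ 2))
          = rexp (-c₂ * ‖z‖ ^ 2 / (2 * A)) * rexp (-(A / (2 * σ ^ 2)) * ‖y₀ - m‖ ^ 2) := by
        rw [← Real.exp_add, ← Real.exp_add]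
        congr 1
        have := hexp y₀
        linear_combination -this
      calc q₀ y₀ * rexp (-‖z - γ • y₀‖ ^ 2 / (2 * σ ^ 2))
          ≤ (c₁ * rexp (-c₂ * ‖y₀‖ ^ 2 / 2)) * rexp (-‖z - γ • y₀‖ ^ 2 / (2 * σ ^ 2)) :=
            mul_le_mul_of_nonneg_right (htail y₀) (exp_pos _).le
        _ = K * rexp (-(A / (2 * σ ^ 2)) * ‖y₀ - m‖ ^ 2) := by
            rw [hK, mul_assoc, key, mul_assoc]
    calc |z i - γ * y₀ i| / σ ^ 2 * q₀ y₀ * rexp (-‖z - γ • y₀‖ ^ 2 / (2 * σ ^ 2))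
        = |z i - γ * y₀ i| * (q₀ y₀ * rexp (-‖z - γ • y₀‖ ^ 2 / (2 * σ ^ 2))) / σ ^ 2 := by
          ring
      _ ≤ ((c₂ * σ ^ 2 / A) * |z i| + γ * |y₀ i - m i|) *
            (K * rexp (-(A / (2 * σ ^ 2)) * ‖y₀ - m‖ ^ 2)) / σ ^ 2 := by
          have hXY := mul_le_mul (hcoord y₀) hprod (mul_nonneg (hq₀nn y₀) (exp_pos _).le)
            (add_nonneg (mul_nonneg (by positivity) (abs_nonneg _))
              (mul_nonneg hγ0.le (abs_nonneg _)))
          gcongr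
      _ = g y₀ := by
          rw [hg]
          have hσ' : σ ≠ 0 := ne_of_gt hσ
          field_simp
  -- integrability of the dominating function
  have ie : Integrable (fun t : EuclideanSpace ℝ (Fin d) =>
      rexp (-(A / (2 * σ ^ 2)) * ‖t - m‖ ^ 2)) :=
    (euclid_gauss_integrable hb0).comp_sub_right m
  have im : Integrable (fun t : EuclideanSpace ℝ (Fin d) =>
      |t i - m i| * rexp (-(A / (2 * σ ^ 2)) * ‖t - m‖ ^ 2)) :=
    (euclid_moment_integrable i hb0).comp_sub_right m
  have hgint : Integrable g := by
    rw [hg]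
    exact (ie.const_mul (K * (c₂ / A) * |z i|)).add (im.const_mul (K * (γ / σ ^ 2)))
  -- value of the dominating integral
  have i1 : ∫ t : EuclideanSpace ℝ (Fin d), rexp (-(A / (2 * σ ^ 2)) * ‖t - m‖ ^ 2)
      = ∫ v : EuclideanSpace ℝ (Fin d), rexp (-(A / (2 * σ ^ 2)) * ‖v‖ ^ 2) :=
    integral_sub_right_eq_self (fun v => rexp (-(A / (2 * σ ^ 2)) * ‖v‖ ^ 2)) m
  have i2 : ∫ t : EuclideanSpace ℝ (Fin d),
        |t i - m i| * rexp (-(A / (2 * σ ^ 2)) * ‖t - m‖ ^ 2)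
      = ∫ v : EuclideanSpace ℝ (Fin d), |v i| * rexp (-(A / (2 * σ ^ 2)) * ‖v‖ ^ 2) :=
    integral_sub_right_eq_self (fun v => |v i| * rexp (-(A / (2 * σ ^ 2)) * ‖v‖ ^ 2)) m
  have hI : ∫ y₀, g y₀
      = K * (c₂ / A) * |z i| * (π / (A / (2 * σ ^ 2))) ^ ((d:ℝ) / 2)
      + K * (γ / σ ^ 2) *
          ((1 / (A / (2 * σ ^ 2))) * Real.sqrt (π / (A / (2 * σ ^ 2))) ^ (d - 1)) := by
    rw [hg]
    rw [integral_add (ie.const_mul _) (im.const_mul _), integral_const_mul, integral_const_mul,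
      i1, i2, euclid_moment i hb0]
    have := GaussianFourier.integral_rexp_neg_mul_sq_norm
      (V := EuclideanSpace ℝ (Fin d)) hb0
    rw [finrank_euclideanSpace_fin] at this
    rw [this]
  -- put everything together
  have hC : (0:ℝ) < σ ^ d * (2 * π) ^ ((d:ℝ) / 2) := by
    have := Real.pi_pos
    positivity
  have habs : |(σ ^ d * (2 * π) ^ ((d : ℝ) / 2))⁻¹ *
      ∫ y₀, ((y i - γ * y₀ i - (1 - γ) * f i) / σ ^ 2) * q₀ y₀ *
        rexp (-‖y - γ • y₀ - (1 - γ) • f‖ ^ 2 / (2 * σ ^ 2))|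
      ≤ (σ ^ d * (2 * π) ^ ((d : ℝ) / 2))⁻¹ * ∫ y₀, g y₀ := by
    rw [abs_mul, abs_of_nonneg (inv_nonneg.mpr hC.le)]
    apply mul_le_mul_of_nonneg_left ?_ (inv_nonneg.mpr hC.le)
    calc |∫ y₀, ((y i - γ * y₀ i - (1 - γ) * f i) / σ ^ 2) * q₀ y₀ *
            rexp (-‖y - γ • y₀ - (1 - γ) • f‖ ^ 2 / (2 * σ ^ 2))|
        ≤ ∫ y₀, |((y i - γ * y₀ i - (1 - γ) * f i) / σ ^ 2) * q₀ y₀ *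
            rexp (-‖y - γ • y₀ - (1 - γ) • f‖ ^ 2 / (2 * σ ^ 2))| := by
          exact norm_integral_le_integral_norm (μ := volume)
            (fun y₀ : EuclideanSpace ℝ (Fin d) =>
              ((y i - γ * y₀ i - (1 - γ) * f i) / σ ^ 2) * q₀ y₀ *
                rexp (-‖y - γ • y₀ - (1 - γ) • f‖ ^ 2 / (2 * σ ^ 2)))
      _ ≤ ∫ y₀, g y₀ := integral_mono_of_nonneg
          (Filter.Eventually.of_forall fun y₀ => abs_nonneg _) hgint
          (Filter.Eventually.of_forall hpoint)
  refine habs.trans ?_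
  rw [hI, ← hzi]
  have e0 := gauss_const_eq d σ A hσ hA0
  have e1 := gauss_const_le d hd σ A hσ hA0
  calc (σ ^ d * (2 * π) ^ ((d:ℝ) / 2))⁻¹ *
        (K * (c₂ / A) * |z i| * (π / (A / (2 * σ ^ 2))) ^ ((d:ℝ) / 2)
        + K * (γ / σ ^ 2) *
          ((1 / (A / (2 * σ ^ 2))) * Real.sqrt (π / (A / (2 * σ ^ 2))) ^ (d - 1)))
      = K * ((c₂ / A) * |z i| *
          ((σ ^ d * (2 * π) ^ ((d:ℝ) / 2))⁻¹ * (π / (A / (2 * σ ^ 2))) ^ ((d:ℝ) / 2))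
        + γ * ((σ ^ d * (2 * π) ^ ((d:ℝ) / 2))⁻¹ *
          ((1 / (A / (2 * σ ^ 2))) * Real.sqrt (π / (A / (2 * σ ^ 2))) ^ (d - 1)) * (1 / σ ^ 2))) := by
        ring
    _ ≤ K * ((c₂ / A) * |z i| * A ^ (-(d:ℝ) / 2)
        + γ * (A ^ (-(d:ℝ) / 2) / (σ * Real.sqrt A))) := by
        apply mul_le_mul_of_nonneg_left ?_ hK0
        exact add_le_add (by rw [e0]) (mul_le_mul_of_nonneg_left e1 hγ0.le)
    _ = c₁ * A ^ (-(d:ℝ) / 2) * rexp (-c₂ * ‖z‖ ^ 2 / (2 * A))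
        * (c₂ * |z i| / A + γ / (σ * Real.sqrt A)) := by
        rw [hK]; ring
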